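/- Let λ ∈ ℝ and l = −1/2 + iλ. For every g = (α β; γ δ) in SL(2,ℝ) and every measurable square-integrable function f : ℝ → ℂ, the function x ↦ f((αx+γ)/(βx+δ)) · |βx+δ|^{2l} (defined for almost every x, namely those with βx+δ ≠ 0) is square-integrable and ∫_ℝ |f((αx+γ)/(βx+δ))|² · |βx+δ|^{−2} dx = ∫_ℝ |f(x)|² dx; in particular the operator T_l(g) : f ↦ (x ↦ f((αx+γ)/(βx+δ)) · |βx+δ|^{2l}) is an isometry of L²(ℝ, ℂ). -/

import Mathlib

open MeasureTheory
open scoped MatrixGroups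

section Aux
variable {α β γ δ : ℝ}

lemma measS (β δ : ℝ) : MeasurableSet {x : ℝ | β*x+δ ≠ 0} := by
  have : Measurable fun x : ℝ => β*x+δ := by fun_prop
  exact (this (measurableSet_singleton 0)).compl

lemma nullSc (hdet : α*δ - β*γ = 1) : (volume : Measure ℝ) {x : ℝ | β*x+δ ≠ 0}ᶜ = 0 := by
  by_cases hβ : β = 0
  · have hδ : δ ≠ 0 := fun h => by simp [hβ, h] at hdet
    have : {x : ℝ | β*x+δ ≠ 0}ᶜ = (∅ : Set ℝ) := by
      ext x; simp [hβ, hδ]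
    simp [this]
  · have : {x : ℝ | β*x+δ ≠ 0}ᶜ ⊆ {-δ/β} := by
      intro x hx
      simp only [Set.mem_compl_iff, Set.mem_setOf_eq, not_not] at hx
      have : x = -δ/β := by field_simp; linarith
      simp [this]
    exact measure_mono_null this (measure_singleton _)

lemma injPhi (hdet : α*δ - β*γ = 1) :
    Set.InjOn (fun x : ℝ => (α*x+γ)/(β*x+δ)) {x : ℝ | β*x+δ ≠ 0} := by
  intro x hx y hy hxy
  simp only [Set.mem_setOf_eq] at hx hy
  rw [div_eq_div_iff hx hy] at hxy
  nlinarith [hxy, hdet]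

lemma derivPhi (hdet : α*δ - β*γ = 1) {x : ℝ} (hx : β*x+δ ≠ 0) :
    HasDerivAt (fun x : ℝ => (α*x+γ)/(β*x+δ)) (((β*x+δ)^2)⁻¹) x := by
  have h1 : HasDerivAt (fun x : ℝ => α*x+γ) α x := by
    simpa using ((hasDerivAt_id x).const_mul α).add_const γ
  have h2 : HasDerivAt (fun x : ℝ => β*x+δ) β x := by
    simpa using ((hasDerivAt_id x).const_mul β).add_const δ
  have := h1.div h2 hx
  refine this.congr_deriv ?_; symm
  rw [eq_div_iff (pow_ne_zero 2 hx)]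
  field_simp
  ring_nf
  nlinarith [hdet]

lemma image_null (hdet : α*δ - β*γ = 1) :
    (volume : Measure ℝ)
      (((fun x : ℝ => (α*x+γ)/(β*x+δ)) '' {x : ℝ | β*x+δ ≠ 0})ᶜ) = 0 := by
  have key : ∀ y : ℝ, α - β*y ≠ 0 →
      y ∈ (fun x : ℝ => (α*x+γ)/(β*x+δ)) '' {x : ℝ | β*x+δ ≠ 0} := by
    intro y hy
    refine ⟨(δ*y - γ)/(α - β*y), ?_, ?_⟩
    · have : β*((δ*y - γ)/(α - β*y))+δ = (α-β*y)⁻¹ := by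
        field_simp; ring_nf; nlinarith [hdet]
      simp only [Set.mem_setOf_eq, this]
      exact inv_ne_zero hy
    · have hb : β*((δ*y - γ)/(α - β*y))+δ = (α-β*y)⁻¹ := by
        field_simp; ring_nf; nlinarith [hdet]
      have ha : α*((δ*y - γ)/(α - β*y))+γ = y/(α-β*y) := by
        rw [mul_div_assoc', div_add' _ _ _ hy]; congr 1; linear_combination y * hdet
      simp only [ha, hb]
      field_simp
      exact mul_div_cancel_right₀ y (by rwa [mul_comm β y] at hy)
  have hsub : ((fun x : ℝ => (α*x+γ)/(β*x+δ)) '' {x : ℝ | β*x+δ ≠ 0})ᶜ ⊆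
      {y : ℝ | α - β*y = 0} := by
    intro y hy
    by_contra h
    exact hy (key y h)
  refine measure_mono_null hsub ?_
  by_cases hβ : β = 0
  · have hα : α ≠ 0 := fun h => by simp [hβ, h] at hdet
    have : {y : ℝ | α - β*y = 0} = (∅ : Set ℝ) := by ext y; simp [hβ, hα]
    simp [this]
  · have : {y : ℝ | α - β*y = 0} ⊆ {α/β} := by
      intro y hy
      simp only [Set.mem_setOf_eq] at hy
      have : y = α/β := by field_simp; linarith
      simp [this]
    exact measure_mono_null this (measure_singleton _)

end Aux

section Cov
variable {α β γ δ : ℝ}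

lemma restrS (hdet : α*δ - β*γ = 1) :
    (volume : Measure ℝ).restrict {x : ℝ | β*x+δ ≠ 0} = volume :=
  (Measure.restrict_congr_set (ae_eq_univ.2 (nullSc hdet))).trans Measure.restrict_univ

lemma restrImg (hdet : α*δ - β*γ = 1) :
    (volume : Measure ℝ).restrict
      ((fun x : ℝ => (α*x+γ)/(β*x+δ)) '' {x : ℝ | β*x+δ ≠ 0}) = volume :=
  (Measure.restrict_congr_set (ae_eq_univ.2 (image_null hdet))).trans Measure.restrict_univ

lemma cov_lintegral (hdet : α*δ - β*γ = 1) (h : ℝ → ENNReal) :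
    ∫⁻ x : ℝ, ENNReal.ofReal (((β*x+δ)^2)⁻¹) * h ((α*x+γ)/(β*x+δ)) = ∫⁻ y, h y := by
  have h1 := lintegral_image_eq_lintegral_abs_det_fderiv_mul volume (measS β δ)
      (fun x hx => ((derivPhi hdet hx).hasDerivWithinAt).hasFDerivWithinAt)
      (injPhi hdet) h
  simp only [ContinuousLinearMap.det_toSpanSingleton] at h1
  rw [restrS hdet, restrImg hdet] at h1
  have h2 : ∀ x : ℝ, ENNReal.ofReal (((β*x+δ)^2)⁻¹)
      = ENNReal.ofReal |((β*x+δ)^2)⁻¹| := fun x => by rw [abs_of_nonneg (by positivity)]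
  simp only [h2]
  exact h1.symm

lemma cov_integral (hdet : α*δ - β*γ = 1) (h : ℝ → ℝ) :
    ∫ x : ℝ, (((β*x+δ)^2)⁻¹) * h ((α*x+γ)/(β*x+δ)) = ∫ y, h y := by
  have h1 := integral_image_eq_integral_abs_deriv_smul (measS β δ)
      (fun x hx => ((derivPhi hdet hx).hasDerivWithinAt))
      (injPhi hdet) h
  rw [restrS hdet, restrImg hdet] at h1
  have h2 : ∀ x : ℝ, (((β*x+δ)^2)⁻¹) = |((β*x+δ)^2)⁻¹| := fun x => by
    rw [abs_of_nonneg (by positivity)]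
  simp only [smul_eq_mul, ← h2] at h1
  exact h1.symm

end Cov

section Main
variable {α β γ δ : ℝ}

lemma ae_ne (hdet : α*δ - β*γ = 1) : ∀ᵐ x : ℝ, β*x+δ ≠ 0 := by
  have h := nullSc hdet
  rw [ae_iff]
  convert h using 2
  rfl

lemma qmp (hdet : α*δ - β*γ = 1) :
    Measure.QuasiMeasurePreserving (fun x : ℝ => (α*x+γ)/(β*x+δ)) volume volume := by
  have hm : Measurable fun x : ℝ => (α*x+γ)/(β*x+δ) := by fun_prop
  refine ⟨hm, Measure.AbsolutelyContinuous.mk fun N hN h0 => ?_⟩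
  rw [Measure.map_apply hm hN]
  have key := cov_lintegral hdet (N.indicator 1)
  have hRHS : ∫⁻ y : ℝ, N.indicator 1 y = 0 := by
    rw [lintegral_indicator hN]
    simp [h0]
  rw [hRHS] at key
  have hmeas : Measurable fun x : ℝ =>
      ENNReal.ofReal (((β*x+δ)^2)⁻¹) * N.indicator 1 ((α*x+γ)/(β*x+δ)) := by
    refine Measurable.mul ?_ ?_
    · fun_prop
    · exact (measurable_one.indicator hN).comp hm
  rw [lintegral_eq_zero_iff hmeas] at key
  refine measure_eq_zero_iff_ae_notMem.2 ?_
  filter_upwards [key, ae_ne hdet] with x hx hs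
  intro hxN
  rw [Set.indicator_of_mem (Set.mem_preimage.1 hxN), Pi.one_apply, mul_one] at hx
  rw [show (0 : ℝ → ENNReal) x = 0 from rfl, ENNReal.ofReal_eq_zero] at hx
  have hpos : 0 < ((β*x+δ)^2)⁻¹ := by positivity
  linarith

end Main

section Weight
variable {α β γ δ : ℝ}

lemma weight_meas (l : ℂ) (hl2 : 2*l ≠ 0) (β δ : ℝ) :
    Measurable fun x : ℝ => ((|β*x+δ| : ℝ) : ℂ) ^ (2*l) := by
  have heq : (fun x : ℝ => ((|β*x+δ| : ℝ) : ℂ) ^ (2*l)) = fun x : ℝ =>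
      if β*x+δ = 0 then 0 else Complex.exp ((Real.log |β*x+δ| : ℂ) * (2*l)) := by
    funext x
    by_cases h : β*x+δ = 0
    · simp [h, Complex.zero_cpow hl2]
    · rw [if_neg h, Complex.cpow_def_of_ne_zero
        (Complex.ofReal_ne_zero.2 (abs_ne_zero.2 h)),
        Complex.ofReal_log (abs_nonneg _)]
  rw [heq]
  refine Measurable.ite ?_ measurable_const ?_
  · exact (show Measurable fun x : ℝ => β*x+δ by fun_prop) (measurableSet_singleton 0)
  · exact Complex.continuous_exp.measurable.comp
      ((Complex.measurable_ofReal.comp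
        (Real.measurable_log.comp (by fun_prop : Measurable fun x : ℝ => |β*x+δ|))).mul_const _)

lemma two_l_re {lam : ℝ} {l : ℂ} (hl : l = -(1/2) + Complex.I * lam) : (2*l).re = -1 := by
  rw [hl]
  simp [Complex.mul_re, Complex.add_re]

lemma two_l_ne {lam : ℝ} {l : ℂ} (hl : l = -(1/2) + Complex.I * lam) : 2*l ≠ 0 := by
  intro h
  have := two_l_re hl
  rw [h] at this
  simp at this

lemma norm_weight {lam : ℝ} {l : ℂ} (hl : l = -(1/2) + Complex.I * lam) (t : ℝ) :
    ‖((|t| : ℝ) : ℂ) ^ (2*l)‖ = |t|⁻¹ := by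
  by_cases h : t = 0
  · simp [h, Complex.zero_cpow (two_l_ne hl)]
  · rw [
      Complex.norm_cpow_eq_rpow_re_of_pos (abs_pos.2 h), two_l_re hl]
    rw [Real.rpow_neg_one]

end Weight

lemma pt_ofReal (a b : ℝ) (ha : 0 ≤ a) :
    (ENNReal.ofReal (a * |b|⁻¹)) ^ (2:ℝ)
      = ENNReal.ofReal ((b^2)⁻¹) * ENNReal.ofReal a ^ (2:ℝ) := by
  rw [ENNReal.ofReal_mul ha, ENNReal.mul_rpow_of_nonneg _ _ (by norm_num : (0:ℝ) ≤ 2),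
    mul_comm]
  congr 1
  rw [ENNReal.ofReal_rpow_of_nonneg (by positivity) (by norm_num : (0:ℝ) ≤ 2)]
  congr 1
  rw [show ((2:ℝ)) = ((2:ℕ):ℝ) by norm_num, Real.rpow_natCast]
  simp [inv_pow, sq_abs]

/-- For `l = -1/2 + iλ`, the principal series operator `T_l(g)` is an
isometry of `L²(ℝ, ℂ)`. -/
theorem statement2 (lam : ℝ) (l : ℂ) (hl : l = -(1/2) + Complex.I * lam)
    (g : SL(2, ℝ)) (α β γ δ : ℝ)
    (hg : (g : Matrix (Fin 2) (Fin 2) ℝ) = !![α, β; γ, δ])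
    (f : ℝ → ℂ) (hf : MemLp f 2 (volume : Measure ℝ)) :
    (MemLp (fun x : ℝ =>
        f ((α * x + γ) / (β * x + δ)) * ((|β * x + δ| : ℝ) : ℂ) ^ (2 * l))
      2 (volume : Measure ℝ)) ∧
    ((∫ x : ℝ, ‖f ((α * x + γ) / (β * x + δ))‖ ^ 2 * (|β * x + δ| ^ 2)⁻¹)
      = ∫ x : ℝ, ‖f x‖ ^ 2) ∧
    (eLpNorm (fun x : ℝ =>
        f ((α * x + γ) / (β * x + δ)) * ((|β * x + δ| : ℝ) : ℂ) ^ (2 * l))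
      2 (volume : Measure ℝ) = eLpNorm f 2 (volume : Measure ℝ)) := by
  have hdet : α*δ - β*γ = 1 := by
    have h := g.property
    rw [hg] at h
    simpa [Matrix.det_fin_two_of] using h
  have hnorm : ∀ x : ℝ, ‖f ((α*x+γ)/(β*x+δ)) * ((|β*x+δ| : ℝ) : ℂ) ^ (2*l)‖
      = ‖f ((α*x+γ)/(β*x+δ))‖ * |β*x+δ|⁻¹ := fun x => by
    rw [norm_mul, norm_weight hl]
  have hAESM : AEStronglyMeasurable (fun x : ℝ =>
      f ((α*x+γ)/(β*x+δ)) * ((|β*x+δ| : ℝ) : ℂ) ^ (2*l)) volume :=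
    (hf.1.comp_quasiMeasurePreserving (qmp hdet)).mul
      ((weight_meas l (two_l_ne hl) β δ).aestronglyMeasurable)
  have hL : ∫⁻ x : ℝ, (‖f ((α*x+γ)/(β*x+δ)) * ((|β*x+δ| : ℝ) : ℂ) ^ (2*l)‖₊ : ENNReal) ^ (2:ℝ)
      = ∫⁻ y : ℝ, (‖f y‖₊ : ENNReal) ^ (2:ℝ) := by
    rw [← cov_lintegral hdet (fun y => (‖f y‖₊ : ENNReal) ^ (2:ℝ))]
    congr 1
    funext x
    rw [← enorm_eq_nnnorm, ← enorm_eq_nnnorm, ← ofReal_norm, ← ofReal_norm, hnorm x,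
      pt_ofReal _ _ (norm_nonneg _)]
  have heLp : eLpNorm (fun x : ℝ =>
      f ((α*x+γ)/(β*x+δ)) * ((|β*x+δ| : ℝ) : ℂ) ^ (2*l)) 2 volume
      = eLpNorm f 2 volume := by
    rw [eLpNorm_eq_lintegral_rpow_enorm_toReal two_ne_zero ENNReal.ofNat_ne_top,
        eLpNorm_eq_lintegral_rpow_enorm_toReal two_ne_zero ENNReal.ofNat_ne_top]
    simp only [ENNReal.toReal_ofNat]
    simp only [enorm_eq_nnnorm]
    rw [hL]
  have hint : (∫ x : ℝ, ‖f ((α*x+γ)/(β*x+δ))‖^2 * (|β*x+δ|^2)⁻¹) = ∫ x : ℝ, ‖f x‖^2 := by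
    rw [← cov_integral hdet (fun y => ‖f y‖^2)]
    congr 1
    funext x
    rw [sq_abs, mul_comm]
  exact ⟨⟨hAESM, by rw [heLp]; exact hf.2⟩, hint, heLp⟩
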